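/- Let a ∈ K be a primitive ℓ-th root of unity, b ≥ 0 an integer, 𝓔 = {β_1, …, β_m} a K-basis of L, and for 0 ≤ i ≤ ℓ−1 set B_i = {β_1 a^{bi}, …, β_m a^{bi}}. Let t, r be positive integers and k_0 < k_1 < ⋯ < k_r be integers in {0, …, n−1} with k_r − k_0 ≤ t + r − 1. For each 0 ≤ i ≤ ℓ−1 choose j_i distinct elements α_1^(i), …, α_{j_i}^(i) of B_i, where j_0 + ⋯ + j_{ℓ−1} = t + r. Then the (r+1) × (t+r) block matrix A_0 = (D̃_0 | ⋯ | D̃_{ℓ−1}) over L, where D̃_i has (s, u)-entry σ^{k_s}(α_u^(i)) a^{k_s i} for 0 ≤ s ≤ r and 1 ≤ u ≤ j_i, has rank r + 1. -/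

import Mathlib

open Module LinearMap Finset

section Skew

variable {K L : Type*} [Field K] [Field L] [Algebra K L]

/-- The operator `v ↦ ∑_{d<N} f d * A^{j d} * σ^d v`. -/
noncomputable def skewOp (σ : L ≃ₐ[K] L) (A : L) (f : ℕ → L) (N j : ℕ) : L →ₗ[K] L :=
  ∑ d ∈ Finset.range N, (f d * A ^ (j * d)) • (σ ^ d).toLinearMap

lemma skewOp_apply (σ : L ≃ₐ[K] L) (A : L) (f : ℕ → L) (N j : ℕ) (v : L) :
    skewOp σ A f N j v = ∑ d ∈ Finset.range N, f d * A ^ (j * d) * (σ ^ d) v := by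
  simp [skewOp, mul_assoc]

lemma pow_fix (σ : L ≃ₐ[K] L) {A : L} (hA : σ A = A) (d e : ℕ) :
    (σ ^ d) (A ^ e) = A ^ e := by
  rw [map_pow]
  congr 1
  induction d with
  | zero => rfl
  | succ d ih => rw [pow_succ, AlgEquiv.mul_apply, hA, ih]

lemma finrank_ker_comp {K V : Type*} [Field K] [AddCommGroup V] [Module K V]
    [FiniteDimensional K V] (g h : V →ₗ[K] V) :
    finrank K (ker (g ∘ₗ h)) ≤ finrank K (ker g) + finrank K (ker h) := by
  have hmap : ∀ x : ker (g ∘ₗ h), h x ∈ ker g := fun x => by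
    have hx := x.2
    rw [LinearMap.mem_ker, LinearMap.comp_apply] at hx
    simpa [LinearMap.mem_ker] using hx
  let φ : ker (g ∘ₗ h) →ₗ[K] ker g :=
    (h.domRestrict _).codRestrict _ hmap
  have h1 : finrank K (ker (g ∘ₗ h)) = finrank K (range φ) + finrank K (ker φ) :=
    (LinearMap.finrank_range_add_finrank_ker φ).symm
  have h2 : finrank K (range φ) ≤ finrank K (ker g) := Submodule.finrank_le _
  have h3 : finrank K (ker φ) ≤ finrank K (ker h) := by
    have hψmem : ∀ x : ker φ, ((x : ker (g ∘ₗ h)) : V) ∈ ker h := by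
      intro x
      have hx : φ x.1 = 0 := x.2
      have hx2 := congrArg (Subtype.val) hx
      simp only [φ, LinearMap.codRestrict_apply, LinearMap.domRestrict_apply,
        ZeroMemClass.coe_zero] at hx2
      exact LinearMap.mem_ker.mpr hx2
    let ψ : ker φ →ₗ[K] ker h :=
      (((ker (g ∘ₗ h)).subtype.comp (ker φ).subtype)).codRestrict _ hψmem
    have hinj : Function.Injective ψ := by
      intro x y hxy
      have : ((x : ker (g ∘ₗ h)) : V) = ((y : ker (g ∘ₗ h)) : V) := by
        have := congrArg (Subtype.val) hxy
        exact this
      exact Subtype.ext (Subtype.ext this)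
    exact LinearMap.finrank_le_finrank_of_injective hinj
  omega


end Skew

section Key

variable {K L : Type*} [Field K] [Field L] [Algebra K L]

lemma skew_key [FiniteDimensional K L] (σ : L ≃ₐ[K] L) (A : L) (hA : σ A = A)
    (ℓ m : ℕ) (hℓ : 0 < ℓ) (hm : σ ^ m = 1) (hAprim : IsPrimitiveRoot A ℓ)
    (hlm : Nat.Coprime ℓ m)
    (hfix : ∀ x : L, σ x = x → ∃ c : K, algebraMap K L c = x) :
    ∀ (W : ℕ) (f : ℕ → L), (∀ d, W < d → f d = 0) → f ≠ 0 →
      ∑ j ∈ Finset.range ℓ, finrank K (ker (skewOp σ A f (W + 1) j)) ≤ W := by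
  have hA0 : A ≠ 0 := by
    intro h
    have h1 := hAprim.pow_eq_one
    rw [h, zero_pow hℓ.ne'] at h1
    exact zero_ne_one h1
  have hσne : ∀ x : L, x ≠ 0 → σ x ≠ 0 := by
    intro x hx h
    exact hx (by simpa using congrArg σ.symm h)
  have quot : ∀ (j c : ℕ) (γ v w : L), γ ≠ 0 → w ≠ 0 →
      A ^ j * σ v = γ * v → A ^ (j + c) * σ w = γ * w →
      σ (v * w⁻¹) = A ^ c * (v * w⁻¹) := by
    intro j c γ v w hγ hw h1 h2
    have hσw : σ w ≠ 0 := hσne w hw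
    have hmain : σ v * w = A ^ c * (v * σ w) := by
      have hne : γ * A ^ j ≠ 0 := mul_ne_zero hγ (pow_ne_zero _ hA0)
      apply mul_left_cancel₀ hne
      calc γ * A ^ j * (σ v * w) = (A ^ j * σ v) * (γ * w) := by ring
        _ = (γ * v) * (γ * w) := by rw [h1]
        _ = (γ * v) * (A ^ (j + c) * σ w) := by rw [h2]
        _ = γ * A ^ j * (A ^ c * (v * σ w)) := by rw [pow_add]; ring
    rw [map_mul, map_inv₀]
    field_simp
    linear_combination hmain
  have iter : ∀ (c : ℕ) (u : L), σ u = A ^ c * u → ∀ e, (σ ^ e) u = A ^ (c * e) * u := by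
    intro c u hu e
    induction e with
    | zero => simp
    | succ e ih =>
      rw [pow_succ, AlgEquiv.mul_apply, hu, map_mul, pow_fix σ hA, ih, ← mul_assoc,
        ← pow_add]
      congr 2
      ring
  intro W
  induction W with
  | zero =>
    intro f hsupp hf0
    have hf00 : f 0 ≠ 0 := by
      intro h
      apply hf0
      funext d
      rcases Nat.eq_zero_or_pos d with rfl | hd
      · exact h
      · exact hsupp d hd
    have hker : ∀ j : ℕ, ker (skewOp σ A f 1 j) = ⊥ := by
      intro j
      rw [LinearMap.ker_eq_bot']
      intro v hv
      rw [skewOp_apply] at hv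
      simp only [Finset.sum_range_one, Nat.mul_zero, pow_zero, mul_one, AlgEquiv.one_apply]
        at hv
      exact (mul_eq_zero.mp hv).resolve_left hf00
    simp [hker]
  | succ W IH =>
    intro f hsupp hf0
    by_cases hallker : ∀ j ∈ Finset.range ℓ, ker (skewOp σ A f (W + 1 + 1) j) = ⊥
    · have : ∑ j ∈ Finset.range ℓ, finrank K (ker (skewOp σ A f (W + 1 + 1) j)) = 0 := by
        apply Finset.sum_eq_zero
        intro j hj
        rw [hallker j hj]
        exact finrank_bot K L
      omega
    · push_neg at hallker
      obtain ⟨j0, hj0mem, hj0⟩ := hallker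
      obtain ⟨β, hβker, hβ0⟩ := Submodule.exists_mem_ne_zero_of_ne_bot hj0
      have hβop : skewOp σ A f (W + 1 + 1) j0 β = 0 := LinearMap.mem_ker.mp hβker
      set γ : L := A ^ j0 * σ β * β⁻¹ with hγdef
      have hσβ : σ β ≠ 0 := hσne β hβ0
      have hγ0 : γ ≠ 0 :=
        mul_ne_zero (mul_ne_zero (pow_ne_zero _ hA0) hσβ) (inv_ne_zero hβ0)
      have hγβ : γ * β = A ^ j0 * σ β := by
        rw [hγdef]
        field_simp
      set g : ℕ → L := fun d =>
        ∑ e ∈ Finset.Ico d (W + 1), f (e + 1) * ∏ u ∈ Finset.Ico d e, (σ ^ (u + 1)) γ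
        with hgdef
      have hgsupp : ∀ d, W < d → g d = 0 := by
        intro d hd
        simp only [hgdef]
        rw [Finset.Ico_eq_empty (by omega), Finset.sum_empty]
      have hrec : ∀ d, g d = f (d + 1) + g (d + 1) * (σ ^ (d + 1)) γ := by
        intro d
        rcases lt_or_ge d (W + 1) with hd | hd
        · simp only [hgdef]
          rw [Finset.sum_eq_sum_Ico_succ_bot hd]
          simp only [Finset.Ico_self, Finset.prod_empty, mul_one]
          congr 1
          rw [Finset.sum_mul]
          apply Finset.sum_congr rfl
          intro e he
          have hde : d < e := (Finset.mem_Ico.mp he).1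
          rw [Finset.prod_eq_prod_Ico_succ_bot hde]
          ring
        · rw [hgsupp d (by omega), hgsupp (d + 1) (by omega), hsupp (d + 1) (by omega)]
          ring
      set ρ : L := f 0 + g 0 * γ with hρdef
      have hfd : ∀ d, f (d + 1) = g d - g (d + 1) * (σ ^ (d + 1)) γ := by
        intro d
        have h := hrec d
        linear_combination -h
      have hf0eq : f 0 = ρ - g 0 * γ := by rw [hρdef]; ring
      have hid : ∀ (j : ℕ) (v : L),
          skewOp σ A f (W + 1 + 1) j v
            = skewOp σ A g (W + 1) j (A ^ j * σ v - γ * v) + ρ * v := by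
        intro j v
        rw [skewOp_apply, skewOp_apply]
        have hterm : ∀ d, g d * A ^ (j * d) * (σ ^ d) (A ^ j * σ v - γ * v)
            = g d * A ^ (j * (d + 1)) * (σ ^ (d + 1)) v
              - g d * (σ ^ d) γ * A ^ (j * d) * (σ ^ d) v := by
          intro d
          have hσσ : (σ ^ d) (σ v) = (σ ^ (d + 1)) v := by
            rw [pow_succ, AlgEquiv.mul_apply]
          rw [map_sub, map_mul, map_mul, pow_fix σ hA d j, hσσ,
            show j * (d + 1) = j * d + j by ring, pow_add]
          ring
        rw [Finset.sum_congr rfl (fun d _ => hterm d), Finset.sum_sub_distrib]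
        have hLHS : ∑ d ∈ Finset.range (W + 1 + 1), f d * A ^ (j * d) * (σ ^ d) v
            = (∑ d ∈ Finset.range (W + 1),
                f (d + 1) * A ^ (j * (d + 1)) * (σ ^ (d + 1)) v) + f 0 * v := by
          rw [Finset.sum_range_succ' (fun d => f d * A ^ (j * d) * (σ ^ d) v) (W + 1)]
          simp
        rw [hLHS]
        have hsplit : ∑ d ∈ Finset.range (W + 1),
              f (d + 1) * A ^ (j * (d + 1)) * (σ ^ (d + 1)) v
            = (∑ d ∈ Finset.range (W + 1), g d * A ^ (j * (d + 1)) * (σ ^ (d + 1)) v)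
              - ∑ d ∈ Finset.range (W + 1),
                  g (d + 1) * (σ ^ (d + 1)) γ * A ^ (j * (d + 1)) * (σ ^ (d + 1)) v := by
          rw [← Finset.sum_sub_distrib]
          apply Finset.sum_congr rfl
          intro d _
          rw [hfd d]
          ring
        rw [hsplit]
        have hS2 : ∑ d ∈ Finset.range (W + 1),
              g (d + 1) * (σ ^ (d + 1)) γ * A ^ (j * (d + 1)) * (σ ^ (d + 1)) v
            = (∑ d ∈ Finset.range (W + 1),
                g d * (σ ^ d) γ * A ^ (j * d) * (σ ^ d) v) - g 0 * γ * v := by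
          have e1 := Finset.sum_range_succ'
            (fun d => g d * (σ ^ d) γ * A ^ (j * d) * (σ ^ d) v) (W + 1)
          have e2 := Finset.sum_range_succ
            (fun d => g d * (σ ^ d) γ * A ^ (j * d) * (σ ^ d) v) (W + 1)
          have e3 : g (W + 1) * (σ ^ (W + 1)) γ * A ^ (j * (W + 1)) * (σ ^ (W + 1)) v
              = 0 := by
            rw [hgsupp (W + 1) (by omega)]
            ring
          have e4 : g 0 * (σ ^ 0) γ * A ^ (j * 0) * (σ ^ 0) v = g 0 * γ * v := by
            simp
          rw [e2, e3, add_zero] at e1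
          linear_combination -e1 - e4
        rw [hS2, hf0eq]
        ring
      have hρ0 : ρ = 0 := by
        have h0 : A ^ j0 * σ β - γ * β = 0 := by rw [hγβ]; ring
        have h1 := hid j0 β
        rw [hβop, h0, map_zero] at h1
        have h2 : ρ * β = 0 := by linear_combination -h1
        exact (mul_eq_zero.mp h2).resolve_right hβ0
      set D : ℕ → (L →ₗ[K] L) := fun j =>
        A ^ j • σ.toLinearMap - γ • (LinearMap.id : L →ₗ[K] L) with hDdef
      have hDapply : ∀ (j : ℕ) (v : L), D j v = A ^ j * σ v - γ * v := by
        intro j v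
        simp [hDdef, smul_eq_mul]
      have hDmem : ∀ (j : ℕ) (v : L), v ∈ ker (D j) ↔ A ^ j * σ v = γ * v := by
        intro j v
        rw [LinearMap.mem_ker, hDapply, sub_eq_zero]
      have hcomp : ∀ j : ℕ,
          skewOp σ A f (W + 1 + 1) j = (skewOp σ A g (W + 1) j) ∘ₗ D j := by
        intro j
        ext v
        rw [LinearMap.comp_apply, hDapply, hid j v, hρ0, zero_mul, add_zero]
      have hbound : ∀ j : ℕ, finrank K (ker (skewOp σ A f (W + 1 + 1) j))
          ≤ finrank K (ker (skewOp σ A g (W + 1) j)) + finrank K (ker (D j)) := by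
        intro j
        rw [hcomp j]
        exact finrank_ker_comp _ _
      have hg0 : g ≠ 0 := by
        intro h
        apply hf0
        have hgz : ∀ d, g d = 0 := fun d => by simpa using congrFun h d
        funext d
        simp only [Pi.zero_apply]
        cases d with
        | zero =>
          rw [hf0eq, hρ0, hgz 0]
          ring
        | succ d =>
          rw [hfd d, hgz d, hgz (d + 1)]
          ring
      have huniq : ∀ j ∈ Finset.range ℓ, ∀ j' ∈ Finset.range ℓ,
          ker (D j) ≠ ⊥ → ker (D j') ≠ ⊥ → j = j' := by
        suffices hs : ∀ j j' : ℕ, j ∈ Finset.range ℓ → j' ∈ Finset.range ℓ → j ≤ j' →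
            ker (D j) ≠ ⊥ → ker (D j') ≠ ⊥ → j = j' by
          intro j hj j' hj' h1 h2
          rcases le_total j j' with h | h
          · exact hs j j' hj hj' h h1 h2
          · exact (hs j' j hj' hj h h2 h1).symm
        intro j j' hj hj' hle h1 h2
        obtain ⟨v, hv, hv0⟩ := Submodule.exists_mem_ne_zero_of_ne_bot h1
        obtain ⟨w, hw, hw0⟩ := Submodule.exists_mem_ne_zero_of_ne_bot h2
        have e1 : A ^ j * σ v = γ * v := (hDmem j v).mp hv
        have e2 : A ^ (j + (j' - j)) * σ w = γ * w := by
          rw [Nat.add_sub_cancel' hle]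
          exact (hDmem j' w).mp hw
        have hu := quot j (j' - j) γ v w hγ0 hw0 e1 e2
        have hu0 : v * w⁻¹ ≠ 0 := mul_ne_zero hv0 (inv_ne_zero hw0)
        have hit := iter (j' - j) (v * w⁻¹) hu m
        rw [hm, AlgEquiv.one_apply] at hit
        have hApow : A ^ ((j' - j) * m) = 1 := by
          have h3 : A ^ ((j' - j) * m) * (v * w⁻¹) = 1 * (v * w⁻¹) := by
            rw [one_mul, ← hit]
          exact mul_right_cancel₀ hu0 h3
        have hdvd : ℓ ∣ (j' - j) * m := (hAprim.pow_eq_one_iff_dvd _).mp hApow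
        have hdvd2 : ℓ ∣ j' - j := hlm.dvd_of_dvd_mul_right hdvd
        have hlt : j' - j < ℓ := by
          have := Finset.mem_range.mp hj'
          omega
        have := Nat.eq_zero_of_dvd_of_lt hdvd2 hlt
        · omega
      have hone : ∀ j : ℕ, ker (D j) ≠ ⊥ → finrank K (ker (D j)) ≤ 1 := by
        intro j hne
        obtain ⟨v, hv, hv0⟩ := Submodule.exists_mem_ne_zero_of_ne_bot hne
        have hle : ker (D j) ≤ Submodule.span K {v} := by
          intro w hw
          rcases eq_or_ne w 0 with rfl | hw0
          · exact Submodule.zero_mem _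
          · have e1 : A ^ j * σ w = γ * w := (hDmem j w).mp hw
            have e2 : A ^ (j + 0) * σ v = γ * v := by
              rw [Nat.add_zero]
              exact (hDmem j v).mp hv
            have hu := quot j 0 γ w v hγ0 hv0 e1 e2
            rw [pow_zero, one_mul] at hu
            obtain ⟨c, hc⟩ := hfix _ hu
            rw [Submodule.mem_span_singleton]
            refine ⟨c, ?_⟩
            rw [Algebra.smul_def, hc]
            field_simp
        calc finrank K (ker (D j)) ≤ finrank K (Submodule.span K ({v} : Set L)) :=
              Submodule.finrank_mono hle
          _ = 1 := finrank_span_singleton hv0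
      have hDsum : ∑ j ∈ Finset.range ℓ, finrank K (ker (D j)) ≤ 1 := by
        by_cases hall : ∀ j ∈ Finset.range ℓ, ker (D j) = ⊥
        · have : ∑ j ∈ Finset.range ℓ, finrank K (ker (D j)) = 0 := by
            apply Finset.sum_eq_zero
            intro j hj
            rw [hall j hj]
            exact finrank_bot K L
          omega
        · push_neg at hall
          obtain ⟨j1, hj1, hj1ne⟩ := hall
          rw [Finset.sum_eq_single_of_mem j1 hj1 (fun j hj hne => ?_)]
          · exact hone j1 hj1ne
          · by_cases h : ker (D j) = ⊥
            · rw [h]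
              exact finrank_bot K L
            · exact absurd (huniq j hj j1 hj1 h hj1ne) hne
      calc ∑ j ∈ Finset.range ℓ, finrank K (ker (skewOp σ A f (W + 1 + 1) j))
          ≤ ∑ j ∈ Finset.range ℓ,
            (finrank K (ker (skewOp σ A g (W + 1) j)) + finrank K (ker (D j))) :=
            Finset.sum_le_sum (fun j _ => hbound j)
        _ = (∑ j ∈ Finset.range ℓ, finrank K (ker (skewOp σ A g (W + 1) j)))
            + ∑ j ∈ Finset.range ℓ, finrank K (ker (D j)) := Finset.sum_add_distrib
        _ ≤ W + 1 := add_le_add (IH g hgsupp hg0) hDsum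

end Key


/-- Let `a ∈ K` be a primitive `ℓ`-th root of unity, `𝓔 = {β₁,…,β_m}`
a `K`-basis of `L` and `B_i = {β₁a^{bi},…,β_m a^{bi}}`. Choose `j_i` distinct elements
of each `B_i` (given by subsets `J i ⊆ {1,…,m}`) with `Σ j_i = t + r`, and integers
`k₀ < ⋯ < k_r` in `{0,…,n-1}` with `k_r - k₀ ≤ t + r - 1`. Then the `(r+1) × (t+r)`
matrix `A₀ = (D̃₀ | ⋯ | D̃_{ℓ-1})` with entries `σ^{k_s}(α_u^{(i)}) a^{k_s i}`
has rank `r + 1`. -/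
theorem rank_selected_columns
    -- the tower of fields E ⊆ F, K ⊆ L = FK with F/E of degree m, K/E of degree h
    (E F K L : Type*) [Field E] [Field F] [Field K] [Field L]
    [Algebra E F] [Algebra E K] [Algebra E L] [Algebra F L] [Algebra K L]
    [IsScalarTower E F L] [IsScalarTower E K L]
    (m h ℓ : ℕ) [NeZero m] [NeZero ℓ]
    (hFE : Module.finrank E F = m) (hKE : Module.finrank E K = h)
    (hcap : Set.range (algebraMap F L) ∩ Set.range (algebraMap K L)
      = Set.range (algebraMap E L))
    (hcomp : Algebra.adjoin K (Set.range (algebraMap F L)) = ⊤)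
    -- L/K cyclic Galois of degree m with generator σ
    [IsGalois K L] (hLK : Module.finrank K L = m)
    (σ : L ≃ₐ[K] L) (hσgen : ∀ τ : L ≃ₐ[K] L, τ ∈ Subgroup.zpowers σ)
    -- ℓ coprime with m and with the characteristic of K
    (hlm : Nat.Coprime ℓ m) (hchar : (ℓ : K) ≠ 0)
    -- a primitive ℓ-th root of unity a ∈ K, an integer b ≥ 0, a K-basis 𝓔 of L
    (a : K) (ha : IsPrimitiveRoot a ℓ) (b : ℕ) (β : Basis (Fin m) K L)
    -- positive integers t, r and k₀ < ⋯ < k_r in {0,…,n-1} with k_r - k₀ ≤ t+r-1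
    (t r : ℕ) (ht : 0 < t) (hr : 0 < r) (k : Fin (r + 1) → ℕ)
    (hkmono : StrictMono k) (hkn : ∀ s, k s < ℓ * m)
    (hkspread : k (Fin.last r) - k 0 ≤ t + r - 1)
    -- the selections J i of j_i distinct elements of each B_i, with Σ j_i = t+r
    (J : Fin ℓ → Finset (Fin m)) (hJ : ∑ i, (J i).card = t + r) :
    Matrix.rank
      (Matrix.of fun (s : Fin (r + 1)) (p : {p : Fin ℓ × Fin m // p.2 ∈ J p.1}) =>
        (σ ^ (k s)) (β p.1.2 * (algebraMap K L a) ^ (b * (p.1.1 : ℕ)))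
          * (algebraMap K L a) ^ (k s * (p.1.1 : ℕ)) : Matrix _ _ L)
      = r + 1 := by
  classical
  have hm0 : 0 < m := Nat.pos_of_ne_zero (NeZero.ne m)
  have hℓ0 : 0 < ℓ := Nat.pos_of_ne_zero (NeZero.ne ℓ)
  have hfin : FiniteDimensional K L := FiniteDimensional.of_finrank_pos (hLK ▸ hm0)
  set A : L := algebraMap K L a with hAdef
  have hA : σ A = A := σ.commutes a
  have hm : σ ^ m = 1 := by
    have hcard : Fintype.card (L ≃ₐ[K] L) = m := by
      rw [← Nat.card_eq_fintype_card, IsGalois.card_aut_eq_finrank K L, hLK]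
    rw [← hcard]
    exact pow_card_eq_one
  have hA0 : A ≠ 0 := by
    simp only [hAdef, ne_eq, map_eq_zero]
    intro h0
    have h1 := ha.pow_eq_one
    rw [h0, zero_pow hℓ0.ne'] at h1
    exact zero_ne_one h1
  have hAprim : IsPrimitiveRoot A ℓ := ha.map_of_injective (algebraMap K L).injective
  have hfix : ∀ x : L, σ x = x → ∃ c : K, algebraMap K L c = x := by
    intro x hx
    have hn : ∀ n : ℕ, (σ ^ n) x = x := by
      intro n
      induction n with
      | zero => rfl
      | succ n ih => rw [pow_succ, AlgEquiv.mul_apply, hx, ih]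
    have hσz : ∀ z : ℤ, (σ ^ z) x = x := by
      intro z
      cases z with
      | ofNat n => rw [Int.ofNat_eq_coe, zpow_natCast]; exact hn n
      | negSucc n =>
        rw [zpow_negSucc]
        have h2 : ((σ ^ (n + 1))⁻¹ * σ ^ (n + 1)) x = (σ ^ (n + 1))⁻¹ x := by
          rw [AlgEquiv.mul_apply, hn (n + 1)]
        rw [inv_mul_cancel, AlgEquiv.one_apply] at h2
        exact h2.symm
    have hxfix : x ∈ IntermediateField.fixedField (⊤ : Subgroup (L ≃ₐ[K] L)) := by
      rintro ⟨τ, -⟩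
      obtain ⟨z, hz⟩ := hσgen τ
      have hτ : τ x = x := by rw [← hz]; exact hσz z
      simpa using hτ
    have hbot : x ∈ (⊥ : IntermediateField K L) := by
      have heq : IntermediateField.fixedField (⊤ : Subgroup (L ≃ₐ[K] L)) = ⊥ :=
        ((IsGalois.tfae (F := K) (E := L)).out 0 1).mp (inferInstance : IsGalois K L)
      rw [← heq]
      exact hxfix
    exact IntermediateField.mem_bot.mp hbot
  -- reduce to row independence
  have hind : LinearIndependent L
      (fun (s : Fin (r + 1)) (p : {p : Fin ℓ × Fin m // p.2 ∈ J p.1}) =>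
        (σ ^ (k s)) (β p.1.2 * A ^ (b * (p.1.1 : ℕ))) * A ^ (k s * (p.1.1 : ℕ))) := by
    by_contra hnot
    rw [Fintype.not_linearIndependent_iff] at hnot
    obtain ⟨c, hsum, s0, hs0⟩ := hnot
    have hrel : ∀ p : {p : Fin ℓ × Fin m // p.2 ∈ J p.1},
        ∑ s, c s * ((σ ^ (k s)) (β p.1.2 * A ^ (b * (p.1.1 : ℕ)))
          * A ^ (k s * (p.1.1 : ℕ))) = 0 := by
      intro p
      have := congrFun hsum p
      simpa [Finset.sum_apply, smul_eq_mul] using this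
    set f : ℕ → L := fun d => ∑ s, if k s = d then c s else 0 with hfdef
    have hfk : ∀ s, f (k s) = c s := by
      intro s
      simp only [hfdef]
      rw [Finset.sum_eq_single s (fun b _ hb => if_neg (fun hk => hb (hkmono.injective hk)))
        (fun hs => absurd (Finset.mem_univ s) hs), if_pos rfl]
    have hfne : ∀ d, f d ≠ 0 → ∃ s, k s = d := by
      intro d hd
      by_contra hcon
      push_neg at hcon
      apply hd
      simp only [hfdef]
      exact Finset.sum_eq_zero (fun s _ => if_neg (hcon s))
    set W : ℕ := t + r - 1 with hWdef
    set f' : ℕ → L := fun d => f (k 0 + d) with hf'def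
    have hk0le : ∀ s, k 0 ≤ k s := fun s => hkmono.monotone (Fin.zero_le s)
    have hkla : ∀ s, k s ≤ k (Fin.last r) := fun s => hkmono.monotone (Fin.le_last s)
    have hsupp' : ∀ d, W < d → f' d = 0 := by
      intro d hd
      by_contra hne
      obtain ⟨s, hs⟩ := hfne _ hne
      have h1 := hkla s
      have h2 := hk0le s
      have h3 := hkla (0 : Fin (r + 1))
      omega
    have hf'ne : f' ≠ 0 := by
      intro hzero
      apply hs0
      have h2 := hk0le s0
      have h3 : f' (k s0 - k 0) = c s0 := by
        simp only [hf'def]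
        rw [show k 0 + (k s0 - k 0) = k s0 by omega, hfk s0]
      rw [congrFun hzero (k s0 - k 0)] at h3
      exact h3.symm.trans rfl
    -- expansion of the skew operators selected by `f'`
    have hexp : ∀ (i : Fin ℓ) (v : L),
        skewOp σ A f' (W + 1) (i : ℕ) v
          = ∑ s, c s * A ^ ((i : ℕ) * (k s - k 0)) * (σ ^ (k s - k 0)) v := by
      intro i v
      rw [skewOp_apply]
      have hstep : ∀ d ∈ Finset.range (W + 1),
          f' d * A ^ ((i : ℕ) * d) * (σ ^ d) v
            = ∑ s, (if k s = k 0 + d then c s * A ^ ((i : ℕ) * d) * (σ ^ d) v else 0) := by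
        intro d _
        simp only [hf'def, hfdef]
        rw [Finset.sum_mul, Finset.sum_mul]
        apply Finset.sum_congr rfl
        intro s _
        by_cases hks : k s = k 0 + d
        · rw [if_pos hks, if_pos hks]
        · rw [if_neg hks, if_neg hks, zero_mul, zero_mul]
      rw [Finset.sum_congr rfl hstep, Finset.sum_comm]
      apply Finset.sum_congr rfl
      intro s _
      have hmem : k s - k 0 ∈ Finset.range (W + 1) := by
        have h1 := hkla s
        have h2 := hk0le s
        rw [Finset.mem_range]
        omega
      rw [Finset.sum_eq_single_of_mem (k s - k 0) hmem
        (fun d _ hd => if_neg (fun hk => hd (by omega))),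
        if_pos (by have := hk0le s; omega)]
    -- kernel membership of the selected basis vectors
    have hker : ∀ (i : Fin ℓ) (j : Fin m), j ∈ J i →
        (σ ^ (k 0)) (β j) * A ^ (b * (i : ℕ))
          ∈ LinearMap.ker (skewOp σ A f' (W + 1) (i : ℕ)) := by
      intro i j hj
      rw [LinearMap.mem_ker]
      have hcancel : A ^ ((i : ℕ) * k 0)
          * skewOp σ A f' (W + 1) (i : ℕ) ((σ ^ (k 0)) (β j) * A ^ (b * (i : ℕ)))
          = ∑ s, c s * ((σ ^ (k s)) (β j * A ^ (b * (i : ℕ)))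
            * A ^ (k s * (i : ℕ))) := by
        rw [hexp, Finset.mul_sum]
        apply Finset.sum_congr rfl
        intro s _
        have h2 := hk0le s
        have hσv : (σ ^ (k s - k 0)) ((σ ^ (k 0)) (β j) * A ^ (b * (i : ℕ)))
            = (σ ^ (k s)) (β j) * A ^ (b * (i : ℕ)) := by
          rw [map_mul, pow_fix σ hA, ← AlgEquiv.mul_apply, ← pow_add,
            show k s - k 0 + k 0 = k s by omega]
        rw [hσv, map_mul (σ ^ (k s)), pow_fix σ hA]
        have hpow : A ^ ((i : ℕ) * k 0) * A ^ ((i : ℕ) * (k s - k 0))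
            = A ^ (k s * (i : ℕ)) := by
          rw [← pow_add, ← Nat.mul_add, show k 0 + (k s - k 0) = k s by omega,
            Nat.mul_comm]
        linear_combination (c s * ((σ ^ (k s)) (β j) * A ^ (b * (i : ℕ)))) * hpow
      have h0 := hrel ⟨(i, j), hj⟩
      have hAk : A ^ ((i : ℕ) * k 0) ≠ 0 := pow_ne_zero _ hA0
      have := hcancel.trans h0
      exact (mul_eq_zero.mp this).resolve_left hAk
    -- each `J i` gives independent vectors in the kernel
    have hcard : ∀ i : Fin ℓ, (J i).card
        ≤ Module.finrank K (LinearMap.ker (skewOp σ A f' (W + 1) (i : ℕ))) := by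
      intro i
      set Φ : L →ₗ[K] L := A ^ (b * (i : ℕ)) • (σ ^ (k 0)).toLinearMap with hΦ
      have hΦapply : ∀ x : L, Φ x = A ^ (b * (i : ℕ)) * (σ ^ (k 0)) x := by
        intro x
        simp [hΦ, smul_eq_mul]
      have hΦker : LinearMap.ker Φ = ⊥ := by
        rw [LinearMap.ker_eq_bot']
        intro x hx
        rw [hΦapply] at hx
        rcases mul_eq_zero.mp hx with h1 | h1
        · exact absurd h1 (pow_ne_zero _ hA0)
        · exact (map_eq_zero_iff _ (σ ^ (k 0)).injective).mp h1
      have hli : LinearIndependent K (fun j : (J i) => Φ (β j)) :=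
        (β.linearIndependent.comp _ Subtype.val_injective).map' Φ hΦker
      have hmem : ∀ j : (J i), Φ (β j)
          ∈ LinearMap.ker (skewOp σ A f' (W + 1) (i : ℕ)) := by
        intro j
        rw [hΦapply, mul_comm]
        exact hker i j j.2
      have hli2 : LinearIndependent K
          (fun j : (J i) => (⟨Φ (β j), hmem j⟩ :
            LinearMap.ker (skewOp σ A f' (W + 1) (i : ℕ)))) := by
        apply LinearIndependent.of_comp
          (LinearMap.ker (skewOp σ A f' (W + 1) (i : ℕ))).subtype
        exact hli
      have := hli2.fintype_card_le_finrank
      simpa [Fintype.card_coe] using this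
    -- contradiction with `skew_key`
    have hkey := skew_key σ A hA ℓ m hℓ0 hm hAprim hlm hfix W f' hsupp' hf'ne
    have hsum2 : ∑ i : Fin ℓ,
        Module.finrank K (LinearMap.ker (skewOp σ A f' (W + 1) (i : ℕ)))
        = ∑ j ∈ Finset.range ℓ,
          Module.finrank K (LinearMap.ker (skewOp σ A f' (W + 1) j)) :=
      Fin.sum_univ_eq_sum_range
        (fun j => Module.finrank K (LinearMap.ker (skewOp σ A f' (W + 1) j))) ℓ
    have hfinal : t + r ≤ W := by
      calc t + r = ∑ i, (J i).card := hJ.symm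
        _ ≤ ∑ i : Fin ℓ,
            Module.finrank K (LinearMap.ker (skewOp σ A f' (W + 1) (i : ℕ))) :=
          Finset.sum_le_sum (fun i _ => hcard i)
        _ = _ := hsum2
        _ ≤ W := hkey
    omega
  have := hind.rank_matrix
  rw [Fintype.card_fin] at this
  exact this
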